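/- (Lemma of Section 2.2, q-case: q⁻¹-factorial moments of the negative q-binomial distribution of the first kind.) Let n ≥ 1 be a natural number, α ∈ (0,1) and m ∈ ℕ. Then the series ∑_{u=0}^{∞} [u]_{m,q⁻¹} · C_q(n+u−1, u) · α^{u} · q^{b(u)} / ⟨1⊕α⟩_{n+u} converges, with sum equal to [n+m−1]_{m,q} · α^{m}. -/

import Mathlib

open Finset

/-- q-integer `[k]_q = (1 - q^k)/(1 - q)`. -/
noncomputable def qInt (q : ℝ) (k : ℤ) : ℝ := (1 - q ^ k) / (1 - q)

/-- q-factorial `[n]_q! = ∏_{i=1}^n [i]_q`. -/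
noncomputable def qFact (q : ℝ) (n : ℕ) : ℝ := ∏ i ∈ Finset.Icc 1 n, qInt q (i : ℤ)

/-- q-binomial coefficient `C_q(n,k)`. -/
noncomputable def qBinom (q : ℝ) (n k : ℕ) : ℝ := qFact q n / (qFact q k * qFact q (n - k))

/-- q-falling factorial `[u]_{m,q} = ∏_{i=1}^m [u-i+1]_q`. -/
noncomputable def qFall (q : ℝ) (u : ℤ) (m : ℕ) : ℝ := ∏ i ∈ Finset.Icc 1 m, qInt q (u - (i : ℤ) + 1)

/-- `[k]_{q⁻¹} = q^{1-k} · [k]_q`. -/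
noncomputable def qIntInv (q : ℝ) (k : ℤ) : ℝ := q ^ (1 - k) * qInt q k

/-- `[u]_{m,q⁻¹} = ∏_{i=1}^m [u-i+1]_{q⁻¹}`. -/
noncomputable def qFallInv (q : ℝ) (u : ℤ) (m : ℕ) : ℝ := ∏ i ∈ Finset.Icc 1 m, qIntInv q (u - (i : ℤ) + 1)

/-- `b(k) = k(k-1)/2`. -/
def bb (k : ℕ) : ℕ := k * (k - 1) / 2

/-- `⟨1 ⊕ α⟩_m = ∏_{i=1}^m (1 + α q^{i-1})`. -/
noncomputable def oplus (q α : ℝ) (m : ℕ) : ℝ := ∏ i ∈ Finset.Icc 1 m, (1 + α * q ^ (i - 1))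

/-- `⟨1 ⊖ β⟩_m = ∏_{i=1}^m (1 - β q^{i-1})`. -/
noncomputable def ominus (q β : ℝ) (m : ℕ) : ℝ := ∏ i ∈ Finset.Icc 1 m, (1 - β * q ^ (i - 1))

/-- q-trinomial coefficient `T_q(n; x₁, x₂)`. -/
noncomputable def qTri (q : ℝ) (n x1 x2 : ℕ) : ℝ :=
  qFact q n / (qFact q x1 * qFact q x2 * qFact q (n - x1 - x2))

set_option linter.unusedSectionVars false
set_option linter.unusedVariables false
section Basics

variable {q : ℝ} (hq0 : 0 < q) (hq1 : q < 1)

lemma qInt_natCast (q : ℝ) (j : ℕ) : qInt q (j : ℤ) = (1 - q ^ j) / (1 - q) := by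
  rw [qInt, zpow_natCast]

include hq0 hq1

lemma one_sub_q_pos : 0 < 1 - q := by linarith

lemma qInt_nonneg (j : ℕ) : 0 ≤ qInt q (j : ℤ) := by
  rw [qInt_natCast]
  apply div_nonneg _ (by linarith)
  have := pow_le_one₀ hq0.le hq1.le (n := j)
  linarith

lemma qInt_pos {j : ℕ} (hj : 1 ≤ j) : 0 < qInt q (j : ℤ) := by
  rw [qInt_natCast]
  apply div_pos _ (by linarith)
  have := pow_lt_one₀ hq0.le hq1 (by omega : j ≠ 0)
  linarith

lemma qInt_ge_one {j : ℕ} (hj : 1 ≤ j) : 1 ≤ qInt q (j : ℤ) := by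
  rw [qInt_natCast, le_div_iff₀ (by linarith)]
  have h1 : q ^ j ≤ q ^ 1 := pow_le_pow_of_le_one hq0.le hq1.le hj
  simpa using by linarith

lemma qInt_le (j : ℕ) : qInt q (j : ℤ) ≤ 1 / (1 - q) := by
  rw [qInt_natCast, div_le_div_iff₀ (by linarith) (by linarith)]
  have : 0 ≤ q ^ j := pow_nonneg hq0.le j
  nlinarith [one_sub_q_pos hq0 hq1]

omit hq0 hq1

lemma qFact_zero (q : ℝ) : qFact q 0 = 1 := by simp [qFact]

lemma qFact_succ (q : ℝ) (n : ℕ) : qFact q (n + 1) = qFact q n * qInt q ((n : ℤ) + 1) := by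
  rw [qFact, qFact, Finset.prod_Icc_succ_top (by omega : 1 ≤ n + 1)]
  push_cast
  ring

include hq0 hq1

lemma qFact_pos (n : ℕ) : 0 < qFact q n := by
  induction n with
  | zero => simp [qFact_zero]
  | succ k ih =>
    rw [qFact_succ]
    have : 0 < qInt q ((k : ℤ) + 1) := by
      have := qInt_pos hq0 hq1 (j := k + 1) (by omega)
      push_cast at this ⊢; linarith
    positivity

lemma qFact_ge_one (n : ℕ) : 1 ≤ qFact q n := by
  induction n with
  | zero => simp [qFact_zero]
  | succ k ih =>
    rw [qFact_succ]
    have h : (1:ℝ) ≤ qInt q ((k : ℤ) + 1) := by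
      have := qInt_ge_one hq0 hq1 (j := k + 1) (by omega)
      push_cast at this ⊢; linarith
    nlinarith

lemma qFact_le (n : ℕ) : qFact q n ≤ (1 / (1 - q)) ^ n := by
  induction n with
  | zero => simp [qFact_zero]
  | succ k ih =>
    rw [qFact_succ, pow_succ]
    have h : qInt q ((k : ℤ) + 1) ≤ 1 / (1 - q) := by
      have := qInt_le hq0 hq1 (j := k + 1)
      push_cast at this ⊢; linarith
    have h1 : 0 < qFact q k := qFact_pos hq0 hq1 k
    have h2 : 0 < qInt q ((k:ℤ)+1) := by
      have := qInt_pos hq0 hq1 (j := k + 1) (by omega)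
      push_cast at this ⊢; linarith
    nlinarith

lemma qBinom_pos {n k : ℕ} (hk : k ≤ n) : 0 < qBinom q n k := by
  rw [qBinom]
  have := qFact_pos hq0 hq1 n
  have := qFact_pos hq0 hq1 k
  have := qFact_pos hq0 hq1 (n - k)
  positivity

lemma qBinom_le (n k : ℕ) : qBinom q n k ≤ (1 / (1 - q)) ^ n := by
  rw [qBinom]
  have h1 := qFact_ge_one hq0 hq1 k
  have h2 := qFact_ge_one hq0 hq1 (n - k)
  have h3 := qFact_le hq0 hq1 n
  have h4 := qFact_pos hq0 hq1 n
  calc qFact q n / (qFact q k * qFact q (n - k)) ≤ qFact q n / 1 := by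
        apply div_le_div_of_nonneg_left h4.le one_pos
        nlinarith
    _ ≤ (1 / (1 - q)) ^ n := by simpa using h3

lemma qBinom_self (n : ℕ) : qBinom q n n = 1 := by
  rw [qBinom]
  simp [qFact_zero]
  exact (qFact_pos hq0 hq1 n).ne'

end Basics
lemma bb_succ (j : ℕ) : bb (j + 1) = bb j + j := by
  unfold bb
  cases j with
  | zero => rfl
  | succ k =>
    have h : (k+1+1) * (k+1+1-1) = (k+1)*(k+1-1) + (k+1)*2 := by simp; ring
    rw [show (k+1)*(k+1-1) + (k+1)*2 = (k+1)*(k+1-1) + 2*(k+1) by ring] at h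
    rw [h, Nat.add_mul_div_left _ _ (by norm_num : 0 < 2)]

lemma bb_add (m v : ℕ) : bb (m + v) = bb m + bb v + m * v := by
  induction v with
  | zero => simp [bb]
  | succ k ih =>
    rw [show m + (k+1) = (m+k) + 1 by ring, bb_succ, ih, bb_succ]
    ring

section Pascal

variable {q : ℝ} (hq0 : 0 < q) (hq1 : q < 1)

lemma qInt_add (hq1 : q < 1) (a b : ℕ) :
    qInt q ((a + b : ℕ) : ℤ) = qInt q (a : ℤ) + q ^ a * qInt q (b : ℤ) := by
  rw [qInt_natCast, qInt_natCast, qInt_natCast]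
  have h : (1:ℝ) - q ≠ 0 := by linarith
  field_simp
  ring

include hq0 hq1

/-- q-Pascal: `C(M+1, j+1) = C(M, j) + q^(j+1) C(M, j+1)` for `j+1 ≤ M`. -/
lemma qBinom_pascal {M j : ℕ} (h : j + 1 ≤ M) :
    qBinom q (M + 1) (j + 1) = qBinom q M j + q ^ (j + 1) * qBinom q M (j + 1) := by
  have hMj : M - j = (M - j - 1) + 1 := by omega
  have e1 : qFact q (M + 1) = qFact q M * (qInt q ((j:ℤ)+1) + q ^ (j+1) * qInt q ((M - j : ℕ) : ℤ)) := by
    rw [qFact_succ]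
    congr 1
    have := qInt_add hq1 (j+1) (M - j)
    rw [show j + 1 + (M - j) = M + 1 by omega] at this
    push_cast at this ⊢
    linarith
  have e2 : qFact q (j + 1) = qFact q j * qInt q ((j:ℤ)+1) := qFact_succ q j
  have e3 : qFact q (M - j) = qFact q (M - j - 1) * qInt q ((M - j : ℕ) : ℤ) := by
    rw [hMj, qFact_succ, show ((M - j - 1 : ℕ) : ℤ) + 1 = ((M - j : ℕ) : ℤ) by omega]
    simp [show M - j - 1 + 1 = M - j by omega]
  rw [qBinom, qBinom, qBinom, show M + 1 - (j+1) = M - j by omega,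
    show M - (j+1) = M - j - 1 by omega, e1, e2, e3]
  have h1 : qInt q ((j:ℤ)+1) ≠ 0 := by
    have := qInt_pos hq0 hq1 (j := j + 1) (by omega); push_cast at this; linarith
  have h2 : qInt q ((M - j : ℕ) : ℤ) ≠ 0 := by
    have := qInt_pos hq0 hq1 (j := M - j) (by omega); positivity
  have h3 := (qFact_pos hq0 hq1 j).ne'
  have h4 := (qFact_pos hq0 hq1 (M - j - 1)).ne'
  field_simp

/-- Ratio: `(1 - q^(M-j)) C(M,j) = (1 - q^(j+1)) C(M, j+1)` for `j < M`. -/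
lemma qBinom_ratio {M j : ℕ} (h : j < M) :
    (1 - q ^ (M - j)) * qBinom q M j = (1 - q ^ (j + 1)) * qBinom q M (j + 1) := by
  have e2 : qFact q (j + 1) = qFact q j * qInt q ((j:ℤ)+1) := qFact_succ q j
  have e3 : qFact q (M - j) = qFact q (M - j - 1) * qInt q ((M - j : ℕ) : ℤ) := by
    rw [show M - j = (M - j - 1) + 1 by omega, qFact_succ,
      show ((M - j - 1 : ℕ) : ℤ) + 1 = ((M - j : ℕ) : ℤ) by omega]
    simp [show M - j - 1 + 1 = M - j by omega]
  have r1 : (1 : ℝ) - q ^ (M - j) = (1 - q) * qInt q ((M - j : ℕ) : ℤ) := by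
    rw [qInt_natCast, mul_div_cancel₀]; linarith
  have r2 : (1 : ℝ) - q ^ (j + 1) = (1 - q) * qInt q ((j:ℤ)+1) := by
    have : qInt q ((j:ℤ)+1) = qInt q ((j+1 : ℕ) : ℤ) := by push_cast; ring_nf
    rw [this, qInt_natCast, mul_div_cancel₀]; linarith
  rw [qBinom, qBinom, show M - (j+1) = M - j - 1 by omega, e2, e3, r1, r2]
  have h1 : qInt q ((j:ℤ)+1) ≠ 0 := by
    have := qInt_pos hq0 hq1 (j := j + 1) (by omega); push_cast at this; linarith
  have h2 : qInt q ((M - j : ℕ) : ℤ) ≠ 0 := by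
    have := qInt_pos hq0 hq1 (j := M - j) (by omega); positivity
  have h3 := (qFact_pos hq0 hq1 j).ne'
  have h4 := (qFact_pos hq0 hq1 (M - j - 1)).ne'
  field_simp

end Pascal
section Gauss

variable {q : ℝ} (hq0 : 0 < q) (hq1 : q < 1)

lemma oplus_zero (q α : ℝ) : oplus q α 0 = 1 := by simp [oplus]

lemma oplus_succ (q α : ℝ) (n : ℕ) : oplus q α (n + 1) = oplus q α n * (1 + α * q ^ n) := by
  rw [oplus, oplus, Finset.prod_Icc_succ_top (by omega : 1 ≤ n + 1)]
  norm_num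

lemma oplus_shift (q α : ℝ) (P : ℕ) : oplus q α (P + 1) = (1 + α) * oplus q (α * q) P := by
  induction P with
  | zero => simp [oplus_succ, oplus_zero]
  | succ P ih =>
    rw [oplus_succ, ih, oplus_succ]
    ring

lemma oplus_ge_one {α : ℝ} (hα : 0 ≤ α) (hq0 : 0 ≤ q) (n : ℕ) : 1 ≤ oplus q α n := by
  induction n with
  | zero => simp [oplus_zero]
  | succ k ih =>
    rw [oplus_succ]
    have : 0 ≤ α * q ^ k := by positivity
    nlinarith

lemma oplus_pos {α : ℝ} (hα : 0 ≤ α) (hq0 : 0 ≤ q) (n : ℕ) : 0 < oplus q α n :=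
  lt_of_lt_of_le one_pos (oplus_ge_one hα hq0 n)

include hq0 hq1

lemma qBinom_zero (n : ℕ) : qBinom q n 0 = 1 := by
  rw [qBinom, qFact_zero]
  simp [div_self (qFact_pos hq0 hq1 n).ne']

lemma gauss (P : ℕ) : ∀ β : ℝ, ∑ j ∈ Finset.range (P + 1), qBinom q P j * β ^ j * q ^ bb j
    = oplus q β P := by
  induction P with
  | zero =>
    intro β
    simp [qBinom_self hq0 hq1 0, oplus_zero, bb]
  | succ P ih =>
    intro β
    set g : ℕ → ℝ := fun j => qBinom q P j * (β * q) ^ j * q ^ bb j with hg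
    set T := ∑ i ∈ Finset.range (P + 1), g i with hT
    have hgsum : T = oplus q (β * q) P := ih (β * q)
    have hsplit : ∑ j ∈ Finset.range (P + 1 + 1), qBinom q (P+1) j * β ^ j * q ^ bb j
        = (∑ i ∈ Finset.range (P + 1), qBinom q (P+1) (i+1) * β ^ (i+1) * q ^ bb (i+1))
          + qBinom q (P+1) 0 * β ^ 0 * q ^ bb 0 := Finset.sum_range_succ' _ _
    have h0 : qBinom q (P+1) 0 * β ^ 0 * q ^ bb 0 = 1 := by
      simp [qBinom_zero hq0 hq1, bb]
    have hmid : ∑ i ∈ Finset.range (P + 1), qBinom q (P+1) (i+1) * β ^ (i+1) * q ^ bb (i+1)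
        = (∑ i ∈ Finset.range P, (β * g i + g (i+1))) + β * g P := by
      rw [Finset.sum_range_succ]
      congr 1
      · refine Finset.sum_congr rfl (fun i hi => ?_)
        rw [Finset.mem_range] at hi
        rw [qBinom_pascal hq0 hq1 (by omega : i + 1 ≤ P)]
        simp only [hg]
        rw [bb_succ]
        ring
      · rw [qBinom_self hq0 hq1]
        simp only [hg]
        rw [qBinom_self hq0 hq1, bb_succ]
        ring
    have h1 : ∑ i ∈ Finset.range P, g i = T - g P := by
      rw [hT, Finset.sum_range_succ]; ring
    have h2 : ∑ i ∈ Finset.range P, g (i + 1) = T - g 0 := by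
      have h := Finset.sum_range_succ' g P
      rw [hT]; rw [h]; ring
    have hA : ∑ i ∈ Finset.range P, (β * g i + g (i + 1)) = β * (T - g P) + (T - g 0) := by
      rw [Finset.sum_add_distrib, ← Finset.mul_sum, h1, h2]
    have hg0 : g 0 = 1 := by simp [hg, qBinom_zero hq0 hq1, bb]
    rw [hsplit, h0, hmid, hA, hg0, oplus_shift q β P, ← hgsum]
    ring

end Gauss
section Rec

variable {q : ℝ} (hq0 : 0 < q) (hq1 : q < 1)

include hq0 hq1

lemma F_rec (α : ℝ) (P k : ℕ) :
    (1 + α * q ^ (k + P)) *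
        (∑ w ∈ Finset.range (P + 1), qBinom q (k + P) (k + w) * α ^ (k + w) * q ^ bb (k + w))
      - (∑ w ∈ Finset.range (P + 1),
          qBinom q (k + P + 1) (k + 1 + w) * α ^ (k + 1 + w) * q ^ bb (k + 1 + w))
      = qBinom q (k + P) k * α ^ k * q ^ bb k := by
  set c : ℕ → ℝ := fun w => qBinom q (k + P) (k + w) * α ^ (k + w) * q ^ bb (k + w) with hc
  set h : ℕ → ℝ := fun w => q ^ (k + w) * c w with hh
  set D : ℕ → ℝ := fun w => (1 - q ^ (k + w)) * c w with hD
  set E : ℕ → ℝ := fun w => α * q ^ (k + w) * (1 - q ^ (P - w)) * c w with hE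
  set S1 := ∑ w ∈ Finset.range (P + 1), c w with hS1
  set H := ∑ w ∈ Finset.range (P + 1), h w with hH
  set SD := ∑ w ∈ Finset.range (P + 1), D w with hSD
  -- Step A : second sum equals α*H + H - h 0
  have stepA : ∑ w ∈ Finset.range (P + 1),
      qBinom q (k + P + 1) (k + 1 + w) * α ^ (k + 1 + w) * q ^ bb (k + 1 + w)
      = α * H + (H - h 0) := by
    have e1 : ∑ w ∈ Finset.range (P + 1),
        qBinom q (k + P + 1) (k + 1 + w) * α ^ (k + 1 + w) * q ^ bb (k + 1 + w)
        = (∑ w ∈ Finset.range P, (α * h w + h (w + 1))) + α * h P := by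
      rw [Finset.sum_range_succ]
      congr 1
      · refine Finset.sum_congr rfl (fun w hw => ?_)
        rw [Finset.mem_range] at hw
        have hp := qBinom_pascal hq0 hq1 (M := k + P) (j := k + w) (by omega)
        rw [show k + 1 + w = (k + w) + 1 by ring, show k + P + 1 = (k + P) + 1 by ring, hp]
        simp only [hh, hc]
        rw [bb_succ, show k + (w + 1) = (k + w) + 1 by ring, bb_succ]
        ring
      · rw [show k + 1 + P = (k + P) + 1 by ring, show k + P + 1 = (k + P) + 1 by ring,
          qBinom_self hq0 hq1]
        simp only [hh, hc]
        rw [qBinom_self hq0 hq1, bb_succ]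
        ring
    have e2 : ∑ w ∈ Finset.range P, h w = H - h P := by
      rw [hH, Finset.sum_range_succ]; ring
    have e3 : ∑ w ∈ Finset.range P, h (w + 1) = H - h 0 := by
      have := Finset.sum_range_succ' h P
      rw [hH, this]; ring
    rw [e1, Finset.sum_add_distrib, ← Finset.mul_sum, e2, e3]
    ring
  -- Step B/C : (1 + α q^{k+P}) S1 - (αH + H - h 0) = ∑ (D - E) + h 0
  have stepBC : (1 + α * q ^ (k + P)) * S1 - (α * H + (H - h 0))
      = (∑ w ∈ Finset.range (P + 1), (D w - E w)) + h 0 := by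
    rw [Finset.sum_sub_distrib]
    have eB : α * q ^ (k + P) * S1 - α * H = - ∑ w ∈ Finset.range (P + 1), E w := by
      rw [hS1, hH, Finset.mul_sum, Finset.mul_sum, ← Finset.sum_sub_distrib,
        ← Finset.sum_neg_distrib]
      refine Finset.sum_congr rfl (fun w hw => ?_)
      rw [Finset.mem_range] at hw
      simp only [hE, hh]
      rw [show q ^ (k + P) = q ^ (k + w) * q ^ (P - w) by rw [← pow_add]; congr 1; omega]
      ring
    have eC : S1 - H = SD := by
      rw [hS1, hH, hSD, ← Finset.sum_sub_distrib]
      refine Finset.sum_congr rfl (fun w hw => ?_)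
      simp only [hD, hh]
      ring
    rw [hSD] at eC
    linarith
  -- Step D : ∑ E = SD - D 0
  have stepD : ∑ w ∈ Finset.range (P + 1), E w = SD - D 0 := by
    have e4 : ∑ w ∈ Finset.range (P + 1), E w = ∑ w ∈ Finset.range P, E w := by
      rw [Finset.sum_range_succ]
      have : E P = 0 := by simp [hE]
      rw [this, add_zero]
    have e5 : ∀ w ∈ Finset.range P, E w = D (w + 1) := by
      intro w hw
      rw [Finset.mem_range] at hw
      have hr := qBinom_ratio hq0 hq1 (M := k + P) (j := k + w) (by omega)
      rw [show (k + P) - (k + w) = P - w by omega] at hr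
      simp only [hE, hD, hc]
      rw [show k + (w + 1) = (k + w) + 1 by ring, bb_succ]
      calc α * q ^ (k + w) * (1 - q ^ (P - w)) *
            (qBinom q (k + P) (k + w) * α ^ (k + w) * q ^ bb (k + w))
          = ((1 - q ^ (P - w)) * qBinom q (k + P) (k + w)) *
            (α * q ^ (k + w) * α ^ (k + w) * q ^ bb (k + w)) := by ring
        _ = ((1 - q ^ ((k + w) + 1)) * qBinom q (k + P) ((k + w) + 1)) *
            (α * q ^ (k + w) * α ^ (k + w) * q ^ bb (k + w)) := by rw [hr]
        _ = (1 - q ^ (k + w + 1)) *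
            (qBinom q (k + P) (k + w + 1) * α ^ (k + w + 1) * q ^ (bb (k + w) + (k + w))) := by
            ring
    have e6 : ∑ w ∈ Finset.range P, D (w + 1) = SD - D 0 := by
      have := Finset.sum_range_succ' D P
      rw [hSD, this]; ring
    rw [e4, Finset.sum_congr rfl e5, e6]
  have final : D 0 + h 0 = qBinom q (k + P) k * α ^ k * q ^ bb k := by
    simp only [hD, hh, hc]
    simp only [Nat.add_zero]
    ring
  rw [stepA, stepBC, Finset.sum_sub_distrib, stepD]
  linarith [final]

end Rec
section MainE

variable {q : ℝ} (hq0 : 0 < q) (hq1 : q < 1) {α : ℝ} (hα : 0 < α) (hα' : α < 1)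

include hq0 hq1 hα hα'

lemma partial_eq (P : ℕ) (K : ℕ) :
    ∑ v ∈ Finset.range K, qBinom q (v + P) v * α ^ v * q ^ bb v / oplus q α (v + P + 1)
      = 1 - (∑ w ∈ Finset.range (P + 1),
          qBinom q (K + P) (K + w) * α ^ (K + w) * q ^ bb (K + w)) / oplus q α (K + P) := by
  induction K with
  | zero =>
    have hF0 : ∑ w ∈ Finset.range (P + 1),
        qBinom q (0 + P) (0 + w) * α ^ (0 + w) * q ^ bb (0 + w) = oplus q α P := by
      simpa using gauss hq0 hq1 P α
    rw [Finset.sum_range_zero, hF0]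
    rw [show (0 : ℕ) + P = P by omega, div_self (oplus_pos hα.le hq0.le P).ne']
    ring
  | succ K ih =>
    rw [Finset.sum_range_succ, ih]
    have hrec := F_rec hq0 hq1 α P K
    have hF1 : ∑ w ∈ Finset.range (P + 1),
        qBinom q (K + 1 + P) (K + 1 + w) * α ^ (K + 1 + w) * q ^ bb (K + 1 + w)
        = ∑ w ∈ Finset.range (P + 1),
        qBinom q (K + P + 1) (K + 1 + w) * α ^ (K + 1 + w) * q ^ bb (K + 1 + w) := by
      refine Finset.sum_congr rfl (fun w hw => ?_)
      rw [show K + 1 + P = K + P + 1 by ring]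
    rw [hF1]
    have ho : (0:ℝ) < oplus q α (K + P) := oplus_pos hα.le hq0.le _
    have ht : (0:ℝ) < 1 + α * q ^ (K + P) := by positivity
    have ho' : oplus q α (K + P + 1) = oplus q α (K + P) * (1 + α * q ^ (K + P)) :=
      oplus_succ q α (K + P)
    rw [show K + 1 + P = K + P + 1 by ring, ho']
    set F0 := ∑ w ∈ Finset.range (P + 1),
        qBinom q (K + P) (K + w) * α ^ (K + w) * q ^ bb (K + w) with hF0d
    set F1 := ∑ w ∈ Finset.range (P + 1),
        qBinom q (K + P + 1) (K + 1 + w) * α ^ (K + 1 + w) * q ^ bb (K + 1 + w) with hF1d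
    have hc : qBinom q (K + P) K * α ^ K * q ^ bb K = (1 + α * q ^ (K + P)) * F0 - F1 := by
      linarith [hrec]
    rw [hc, sub_div ((1 + α * q ^ (K + P)) * F0) F1]
    have e1 : (1 + α * q ^ (K + P)) * F0 / (oplus q α (K + P) * (1 + α * q ^ (K + P)))
        = F0 / oplus q α (K + P) := by
      rw [mul_comm (oplus q α (K + P)) _,
        mul_div_mul_left _ _ ht.ne']
    rw [e1]
    ring


lemma tendsto_geom_bb : Filter.Tendsto
    (fun K : ℕ => (α * (1 / (1 - q))) ^ K * q ^ bb K) Filter.atTop (nhds 0) := by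
  set r := α * (1 / (1 - q)) with hr
  have hqs : (0:ℝ) < 1 - q := by linarith
  have hrpos : 0 < r := by positivity
  have hL : ∃ L : ℕ, q ^ L * r < 1 := by
    have h1 : Filter.Tendsto (fun L : ℕ => q ^ L) Filter.atTop (nhds 0) :=
      tendsto_pow_atTop_nhds_zero_of_lt_one hq0.le hq1
    have h2 : (0:ℝ) < 1 / (r + 1) := by positivity
    obtain ⟨L, hL⟩ := (h1.eventually (eventually_lt_nhds h2)).exists
    refine ⟨L, ?_⟩
    have h3 : q ^ L * r < (1 / (r + 1)) * r := mul_lt_mul_of_pos_right hL hrpos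
    have h4 : (1 / (r + 1)) * r < 1 := by
      rw [div_mul_eq_mul_div, div_lt_one (by linarith)]
      linarith
    linarith
  obtain ⟨L, hL⟩ := hL
  have hb : ∀ K : ℕ, 2 * L + 1 ≤ K → r ^ K * q ^ bb K ≤ (q ^ L * r) ^ K := by
    intro K hK
    have hbb : L * K ≤ bb K := by
      have h1 : K * (2 * L) ≤ K * (K - 1) := Nat.mul_le_mul_left _ (by omega)
      have h2 : K * (2 * L) / 2 ≤ K * (K - 1) / 2 := Nat.div_le_div_right h1
      have h3 : K * (2 * L) / 2 = L * K := by
        rw [show K * (2 * L) = L * K * 2 by ring, Nat.mul_div_cancel _ (by norm_num)]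
      rw [bb]; omega
    have h4 : q ^ bb K ≤ q ^ (L * K) := pow_le_pow_of_le_one hq0.le hq1.le hbb
    have h5 : (q ^ L * r) ^ K = q ^ (L * K) * r ^ K := by
      rw [mul_pow, ← pow_mul]
    have h6 : 0 ≤ r ^ K := by positivity
    calc r ^ K * q ^ bb K ≤ r ^ K * q ^ (L * K) := mul_le_mul_of_nonneg_left h4 h6
      _ = (q ^ L * r) ^ K := by rw [h5]; ring
  apply squeeze_zero' (Filter.Eventually.of_forall (fun K => by positivity))
  · exact Filter.eventually_atTop.mpr ⟨2 * L + 1, hb⟩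
  · exact tendsto_pow_atTop_nhds_zero_of_lt_one (by positivity) hL

lemma tendsto_tail (P : ℕ) : Filter.Tendsto
    (fun K : ℕ => (∑ w ∈ Finset.range (P + 1),
        qBinom q (K + P) (K + w) * α ^ (K + w) * q ^ bb (K + w)) / oplus q α (K + P))
    Filter.atTop (nhds 0) := by
  have hqs := one_sub_q_pos hq0 hq1
  set C : ℝ := (P + 1 : ℝ) * (1 / (1 - q)) ^ P with hC
  have hbound : ∀ K : ℕ, (∑ w ∈ Finset.range (P + 1),
      qBinom q (K + P) (K + w) * α ^ (K + w) * q ^ bb (K + w)) / oplus q α (K + P)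
      ≤ C * ((α * (1 / (1 - q))) ^ K * q ^ bb K) := by
    intro K
    have hFnn : 0 ≤ ∑ w ∈ Finset.range (P + 1),
        qBinom q (K + P) (K + w) * α ^ (K + w) * q ^ bb (K + w) := by
      apply Finset.sum_nonneg
      intro w hw
      have := qBinom_pos hq0 hq1 (n := K + P) (k := K + w)
        (by rw [Finset.mem_range] at hw; omega)
      positivity
    have hdiv : (∑ w ∈ Finset.range (P + 1),
        qBinom q (K + P) (K + w) * α ^ (K + w) * q ^ bb (K + w)) / oplus q α (K + P)
        ≤ ∑ w ∈ Finset.range (P + 1),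
        qBinom q (K + P) (K + w) * α ^ (K + w) * q ^ bb (K + w) :=
      div_le_self hFnn (oplus_ge_one hα.le hq0.le _)
    refine hdiv.trans ?_
    have hterm : ∀ w ∈ Finset.range (P + 1),
        qBinom q (K + P) (K + w) * α ^ (K + w) * q ^ bb (K + w)
        ≤ (1 / (1 - q)) ^ P * ((α * (1 / (1 - q))) ^ K * q ^ bb K) := by
      intro w hw
      have h1 : qBinom q (K + P) (K + w) ≤ (1 / (1 - q)) ^ (K + P) :=
        qBinom_le hq0 hq1 _ _
      have h2 : α ^ (K + w) ≤ α ^ K := pow_le_pow_of_le_one hα.le hα'.le (by omega)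
      have h3 : q ^ bb (K + w) ≤ q ^ bb K := by
        apply pow_le_pow_of_le_one hq0.le hq1.le
        rw [bb, bb]
        have : K * (K - 1) ≤ (K + w) * (K + w - 1) :=
          Nat.mul_le_mul (by omega) (by omega)
        exact Nat.div_le_div_right this
      have hbpos : (0:ℝ) < qBinom q (K + P) (K + w) := qBinom_pos hq0 hq1
        (by rw [Finset.mem_range] at hw; omega)
      calc qBinom q (K + P) (K + w) * α ^ (K + w) * q ^ bb (K + w)
          ≤ (1 / (1 - q)) ^ (K + P) * α ^ K * q ^ bb K := by
            apply mul_le_mul (mul_le_mul h1 h2 (by positivity) (by positivity)) h3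
              (by positivity) (by positivity)
        _ = (1 / (1 - q)) ^ P * ((α * (1 / (1 - q))) ^ K * q ^ bb K) := by
            rw [pow_add, mul_pow]
            ring
    calc ∑ w ∈ Finset.range (P + 1), qBinom q (K + P) (K + w) * α ^ (K + w) * q ^ bb (K + w)
        ≤ ∑ _w ∈ Finset.range (P + 1),
          (1 / (1 - q)) ^ P * ((α * (1 / (1 - q))) ^ K * q ^ bb K) :=
          Finset.sum_le_sum hterm
      _ = C * ((α * (1 / (1 - q))) ^ K * q ^ bb K) := by
          rw [Finset.sum_const, Finset.card_range, hC]
          push_cast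
          ring
  have hnn : ∀ K : ℕ, 0 ≤ (∑ w ∈ Finset.range (P + 1),
      qBinom q (K + P) (K + w) * α ^ (K + w) * q ^ bb (K + w)) / oplus q α (K + P) := by
    intro K
    have hFnn : 0 ≤ ∑ w ∈ Finset.range (P + 1),
        qBinom q (K + P) (K + w) * α ^ (K + w) * q ^ bb (K + w) := by
      apply Finset.sum_nonneg
      intro w hw
      have := qBinom_pos hq0 hq1 (n := K + P) (k := K + w)
        (by rw [Finset.mem_range] at hw; omega)
      positivity
    exact div_nonneg hFnn (oplus_pos hα.le hq0.le _).le
  have hlim : Filter.Tendsto (fun K : ℕ => C * ((α * (1 / (1 - q))) ^ K * q ^ bb K))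
      Filter.atTop (nhds 0) := by
    have := (tendsto_geom_bb hq0 hq1 hα hα').const_mul C
    simpa using this
  exact squeeze_zero hnn hbound hlim

lemma hasSum_one (P : ℕ) : HasSum
    (fun v : ℕ => qBinom q (v + P) v * α ^ v * q ^ bb v / oplus q α (v + P + 1)) 1 := by
  rw [hasSum_iff_tendsto_nat_of_nonneg]
  · have heq : (fun K : ℕ => ∑ v ∈ Finset.range K,
        qBinom q (v + P) v * α ^ v * q ^ bb v / oplus q α (v + P + 1))
        = fun K : ℕ => 1 - (∑ w ∈ Finset.range (P + 1),
          qBinom q (K + P) (K + w) * α ^ (K + w) * q ^ bb (K + w)) / oplus q α (K + P) := by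
      funext K
      exact partial_eq hq0 hq1 hα hα' P K
    rw [heq]
    have := (tendsto_tail hq0 hq1 hα hα' P).const_sub 1
    simpa using this
  · intro v
    have := qBinom_pos hq0 hq1 (n := v + P) (k := v) (by omega)
    have := oplus_pos (q := q) hα.le hq0.le (v + P + 1)
    positivity

end MainE
section Reduce

variable {q : ℝ} (hq0 : 0 < q) (hq1 : q < 1)

lemma qFall_zero (q : ℝ) (u : ℤ) : qFall q u 0 = 1 := by simp [qFall]

lemma qFall_succ (q : ℝ) (u : ℤ) (m : ℕ) :
    qFall q u (m + 1) = qFall q u m * qInt q (u - (m + 1 : ℕ) + 1) := by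
  rw [qFall, qFall, Finset.prod_Icc_succ_top (by omega : 1 ≤ m + 1)]

lemma qFallInv_succ (q : ℝ) (u : ℤ) (m : ℕ) :
    qFallInv q u (m + 1) = qFallInv q u m * qIntInv q (u - (m + 1 : ℕ) + 1) := by
  rw [qFallInv, qFallInv, Finset.prod_Icc_succ_top (by omega : 1 ≤ m + 1)]

lemma qFall_fact {m u : ℕ} (hm : m ≤ u) :
    qFall q ((u : ℕ) : ℤ) m * qFact q (u - m) = qFact q u := by
  induction m with
  | zero => simp [qFall_zero]
  | succ k ih =>
    rw [qFall_succ, show ((u:ℤ) - ((k+1:ℕ):ℤ) + 1) = (((u - k : ℕ)):ℤ) by omega]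
    have e1 : qFact q (u - k) = qFact q (u - (k+1)) * qInt q ((((u - (k+1)) : ℕ) : ℤ) + 1) := by
      rw [show u - k = (u - (k+1)) + 1 by omega, qFact_succ]
    have e2 : ((((u - (k+1)) : ℕ) : ℤ) + 1) = (((u - k : ℕ)):ℤ) := by omega
    rw [e2] at e1
    calc qFall q (u:ℤ) k * qInt q (((u - k : ℕ)):ℤ) * qFact q (u - (k+1))
        = qFall q (u:ℤ) k * qFact q (u - k) := by rw [e1]; ring
      _ = qFact q u := ih (by omega)

include hq0 hq1

lemma qFallInv_q (m : ℕ) : ∀ v : ℕ, qFallInv q (((m + v : ℕ)) : ℤ) m * q ^ (bb m + m * v)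
    = qFall q (((m + v : ℕ)) : ℤ) m := by
  induction m with
  | zero => intro v; simp [qFallInv, qFall, bb]
  | succ k ih =>
    intro v
    rw [qFallInv_succ, qFall_succ,
      show ((((k+1) + v : ℕ) : ℤ) - ((k+1:ℕ):ℤ) + 1) = (((v + 1 : ℕ)):ℤ) by omega]
    have hiv : qIntInv q (((v + 1 : ℕ)):ℤ) = (q ^ v)⁻¹ * qInt q (((v + 1 : ℕ)):ℤ) := by
      rw [qIntInv, show (1 - ((v + 1 : ℕ):ℤ)) = -(v:ℤ) by omega, zpow_neg, zpow_natCast]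
    have hcast : (((k+1) + v : ℕ) : ℤ) = ((k + (v+1) : ℕ) : ℤ) := by omega
    have hexp : bb (k+1) + (k+1) * v = (bb k + k * (v+1)) + v := by
      rw [bb_succ]; ring
    rw [hiv, hcast, hexp, pow_add]
    have ihv := ih (v + 1)
    have hq : (q : ℝ) ^ v ≠ 0 := by positivity
    calc qFallInv q ((k + (v+1) : ℕ):ℤ) k * ((q ^ v)⁻¹ * qInt q (((v + 1 : ℕ)):ℤ)) *
          (q ^ (bb k + k * (v+1)) * q ^ v)
        = (qFallInv q ((k + (v+1) : ℕ):ℤ) k * q ^ (bb k + k * (v+1)))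
          * qInt q (((v + 1 : ℕ)):ℤ) * ((q ^ v)⁻¹ * q ^ v) := by ring
      _ = qFall q ((k + (v+1) : ℕ):ℤ) k * qInt q (((v + 1 : ℕ)):ℤ) := by
          rw [ihv, inv_mul_cancel₀ hq, mul_one]

omit hq0 hq1

lemma qFallInv_zero_of_lt {u m : ℕ} (h : u < m) : qFallInv q ((u : ℕ) : ℤ) m = 0 := by
  rw [qFallInv]
  apply Finset.prod_eq_zero (i := u + 1) (by simp [Finset.mem_Icc]; omega)
  rw [show ((u:ℤ) - ((u+1:ℕ):ℤ) + 1) = (0:ℤ) by omega]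
  rw [qIntInv, qInt]
  norm_num

end Reduce
theorem stmt5 (q : ℝ) (hq0 : 0 < q) (hq1 : q < 1) (n : ℕ) (hn : 1 ≤ n) (α : ℝ)
    (hα : 0 < α) (hα' : α < 1) (m : ℕ) :
    HasSum (fun u : ℕ =>
        qFallInv q (u : ℤ) m * qBinom q (n + u - 1) u * α ^ u * q ^ bb u / oplus q α (n + u))
      (qFall q ((n : ℤ) + (m : ℤ) - 1) m * α ^ m) := by
  set P := n + m - 1 with hP
  set f : ℕ → ℝ := fun u =>
    qFallInv q (u : ℤ) m * qBinom q (n + u - 1) u * α ^ u * q ^ bb u / oplus q α (n + u) with hf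
  set C : ℝ := qFall q ((n : ℤ) + (m : ℤ) - 1) m * α ^ m with hC
  have hCast : ((n : ℤ) + (m : ℤ) - 1) = (((n + m - 1 : ℕ)) : ℤ) := by omega
  have hfv : ∀ v : ℕ, f (v + m)
      = C * (qBinom q (v + P) v * α ^ v * q ^ bb v / oplus q α (v + P + 1)) := by
    intro v
    have hFactv := (qFact_pos hq0 hq1 v).ne'
    have hFactn1 := (qFact_pos hq0 hq1 (n - 1)).ne'
    have hFactnm1 := (qFact_pos hq0 hq1 (n + m - 1)).ne'
    have hFactmv := (qFact_pos hq0 hq1 (m + v)).ne'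
    -- falling factorial as ratio
    have eFall : qFall q ((m + v : ℕ) : ℤ) m * qFact q v = qFact q (m + v) := by
      have := qFall_fact (q := q) (m := m) (u := m + v) (by omega)
      rwa [show m + v - m = v by omega] at this
    have hFall1 : qFall q ((m + v : ℕ) : ℤ) m = qFact q (m + v) / qFact q v :=
      (eq_div_iff hFactv).mpr eFall
    have hFall2 : qFall q ((n : ℤ) + (m : ℤ) - 1) m = qFact q (n + m - 1) / qFact q (n - 1) := by
      rw [hCast]
      apply (eq_div_iff hFactn1).mpr
      have := qFall_fact (q := q) (m := m) (u := n + m - 1) (by omega)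
      rwa [show n + m - 1 - m = n - 1 by omega] at this
    -- q-falling-inverse times q-power
    have h1 := qFallInv_q hq0 hq1 m v
    have e_bb : bb (m + v) = (bb m + m * v) + bb v := by
      rw [bb_add]; ring
    have eInv : qFallInv q ((v + m : ℕ) : ℤ) m * q ^ bb (v + m)
        = qFall q ((m + v : ℕ) : ℤ) m * q ^ bb v := by
      rw [show v + m = m + v by ring, e_bb, pow_add, ← mul_assoc, h1]
    -- binomials as ratios
    have eB1 : qBinom q (n + (v + m) - 1) (v + m)
        = qFact q (v + P) / (qFact q (m + v) * qFact q (n - 1)) := by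
      rw [qBinom, show n + (v + m) - 1 - (v + m) = n - 1 by omega,
        show n + (v + m) - 1 = v + P by omega, show v + m = m + v by ring]
    have eB2 : qBinom q (v + P) v = qFact q (v + P) / (qFact q v * qFact q (n + m - 1)) := by
      rw [qBinom, show v + P - v = P by omega, hP]
    -- oplus index
    have eO : oplus q α (n + (v + m)) = oplus q α (v + P + 1) := by
      rw [show n + (v + m) = v + P + 1 by omega]
    show qFallInv q ((v + m : ℕ) : ℤ) m * qBinom q (n + (v + m) - 1) (v + m) * α ^ (v + m)
        * q ^ bb (v + m) / oplus q α (n + (v + m))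
      = C * (qBinom q (v + P) v * α ^ v * q ^ bb v / oplus q α (v + P + 1))
    have key : qFallInv q ((v + m : ℕ) : ℤ) m * qBinom q (n + (v + m) - 1) (v + m)
        * α ^ (v + m) * q ^ bb (v + m)
        = C * (qBinom q (v + P) v * α ^ v * q ^ bb v) := by
      calc qFallInv q ((v + m : ℕ) : ℤ) m * qBinom q (n + (v + m) - 1) (v + m)
            * α ^ (v + m) * q ^ bb (v + m)
          = (qFallInv q ((v + m : ℕ) : ℤ) m * q ^ bb (v + m))
            * qBinom q (n + (v + m) - 1) (v + m) * α ^ (v + m) := by ring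
        _ = (qFall q ((m + v : ℕ) : ℤ) m * q ^ bb v)
            * qBinom q (n + (v + m) - 1) (v + m) * α ^ (v + m) := by rw [eInv]
        _ = C * (qBinom q (v + P) v * α ^ v * q ^ bb v) := by
            rw [hFall1, eB1, hC, hFall2, eB2, pow_add α v m]
            field_simp
    rw [eO, key, mul_div_assoc]
  have key := (hasSum_one hq0 hq1 hα hα' P).mul_left C
  rw [mul_one] at key
  have hfun : (fun v : ℕ => f (v + m))
      = fun v : ℕ => C * (qBinom q (v + P) v * α ^ v * q ^ bb v / oplus q α (v + P + 1)) :=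
    funext hfv
  have h2 : HasSum (fun v : ℕ => f (v + m)) C := by rw [hfun]; exact key
  have h3 := (hasSum_nat_add_iff (f := f) m).mp h2
  have h4 : ∑ i ∈ Finset.range m, f i = 0 := by
    apply Finset.sum_eq_zero
    intro i hi
    rw [Finset.mem_range] at hi
    have : qFallInv q ((i : ℕ) : ℤ) m = 0 := qFallInv_zero_of_lt (q := q) hi
    simp only [hf, this, zero_mul, zero_div]
  rw [h4, add_zero] at h3
  exact h3
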